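/- arXiv:2311.01124 — 2 statements merged into one kernel-verified Lean document; each statement's English description precedes it below -/
import Mathlib

section
/- Let X be a Banach lattice, n ∈ ℕ, and x = (x₁,...,xₙ) ∈ Xⁿ. If τ_{n,x} : H_n → X is the Krivine functional calculus operator (the unique linear, finite-suprema-preserving map with τ_{n,x}(π_{n,j}) = x_j), then for every h ∈ H_n one has τ_{n,x}(h) ≤ ‖h‖_{H_n} · max_{1≤j≤n} |x_j| in the order of X, and consequently ‖τ_{n,x}(h)‖_X ≤ ‖h‖_{H_n} · ‖max_{1≤j≤n} |x_j|‖_X. -/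
open Filter Topology

/-- `h : ℝⁿ → ℝ` is positively homogeneous of degree 1. -/
def PosHomog {n : ℕ} (h : (Fin n → ℝ) → ℝ) : Prop :=
  ∀ l : ℝ, 0 ≤ l → ∀ t, h (l • t) = l * h t

/-- Membership in `H_n`: continuous and positively homogeneous of degree 1. -/
def InHn {n : ℕ} (h : (Fin n → ℝ) → ℝ) : Prop := Continuous h ∧ PosHomog h

/-- The norm of `H_n`: supremum of `|h|` over the unit sphere of the sup norm on `ℝⁿ`. -/
noncomputable def HnNorm {n : ℕ} (h : (Fin n → ℝ) → ℝ) : ℝ :=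
  ⨆ t : {t : Fin n → ℝ // ‖t‖ = 1}, |h t.1|

/-- `τ` is the Krivine functional calculus operator associated to `x ∈ Xⁿ`:
a linear map on `H_n` preserving finite suprema sending the `j`-th coordinate
projection to `x j`. -/
def IsKrivine {X : Type*} [NormedAddCommGroup X] [Lattice X] [HasSolidNorm X]
    [IsOrderedAddMonoid X] [NormedSpace ℝ X]
    {n : ℕ} (x : Fin n → X) (τ : ((Fin n → ℝ) → ℝ) → X) : Prop :=
  (∀ h g, InHn h → InHn g → τ (h + g) = τ h + τ g) ∧
  (∀ (c : ℝ) h, InHn h → τ (c • h) = c • τ h) ∧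
  (∀ h g, InHn h → InHn g → τ (h ⊔ g) = τ h ⊔ τ g) ∧
  (∀ j, τ (fun t => t j) = x j)

/-- For the Krivine functional calculus operator `τ` of `x ∈ Xⁿ` and every `h ∈ H_n`,
`τ h ≤ ‖h‖_{H_n} • max_j |x j|` in the order of `X`, and consequently
`‖τ h‖ ≤ ‖h‖_{H_n} * ‖max_j |x j|‖`. -/
theorem krivine_le_HnNorm_smul_max {X : Type*} [NormedAddCommGroup X] [Lattice X] [HasSolidNorm X]
    [IsOrderedAddMonoid X]
    [NormedSpace ℝ X] {n : ℕ} (hn : 0 < n) (x : Fin n → X)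
    (τ : ((Fin n → ℝ) → ℝ) → X) (hτ : IsKrivine x τ)
    (h : (Fin n → ℝ) → ℝ) (hh : InHn h) :
    τ h ≤ HnNorm h • (Finset.univ.sup' ⟨⟨0, hn⟩, Finset.mem_univ _⟩ fun j => |x j|) ∧
    ‖τ h‖ ≤ HnNorm h * ‖Finset.univ.sup' ⟨⟨0, hn⟩, Finset.mem_univ _⟩ fun j => |x j|‖ := by
  classical
  obtain ⟨hadd, hsmul, hsupτ, hproj⟩ := hτ
  set S : X := Finset.univ.sup' ⟨⟨0, hn⟩, Finset.mem_univ _⟩ fun j => |x j| with hSdef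
  set M : (Fin n → ℝ) → ℝ :=
    fun t => Finset.univ.sup' ⟨⟨0, hn⟩, Finset.mem_univ _⟩ fun j => |t j| with hMdef
  -- closure properties of InHn
  have hsmulIn : ∀ (c : ℝ) (f : (Fin n → ℝ) → ℝ), InHn f → InHn (c • f) := by
    rintro c f ⟨hc, hhom⟩
    refine ⟨hc.const_smul c, fun l hl t => ?_⟩
    simp only [Pi.smul_apply, smul_eq_mul, hhom l hl t]
    ring
  have hsupIn : ∀ f g : (Fin n → ℝ) → ℝ, InHn f → InHn g → InHn (f ⊔ g) := by
    rintro f g ⟨hf, hfh⟩ ⟨hg, hgh⟩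
    refine ⟨hf.sup hg, fun l hl t => ?_⟩
    simp only [Pi.sup_apply, hfh l hl t, hgh l hl t]
    exact (mul_max_of_nonneg _ _ hl).symm
  -- τ of |π_j|
  have habsj : ∀ j : Fin n, InHn (fun t => |t j|) ∧ τ (fun t => |t j|) = |x j| := by
    intro j
    have hπ : InHn (fun t => t j) :=
      ⟨continuous_apply j, fun l hl t => by simp [smul_eq_mul]⟩
    have hπn : InHn (fun t : Fin n → ℝ => -(t j)) := by
      have heqn : ((-1 : ℝ) • fun t : Fin n → ℝ => t j) = fun t : Fin n → ℝ => -(t j) := by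
        funext t; simp
      have := hsmulIn (-1) (fun t => t j) hπ
      rwa [heqn] at this
    have heq : (fun t : Fin n → ℝ => |t j|) = (fun t => t j) ⊔ (fun t => -(t j)) := by
      funext t
      simp [Pi.sup_apply, abs_eq_max_neg]
    have hτn : τ (fun t => -(t j)) = -(x j) := by
      have h1 : (fun t : Fin n → ℝ => -(t j)) = (-1 : ℝ) • (fun t : Fin n → ℝ => t j) := by
        funext t; simp
      rw [h1, hsmul (-1) _ hπ, hproj j]; simp
    constructor
    · rw [heq]; exact hsupIn _ _ hπ hπn
    · rw [heq, hsupτ _ _ hπ hπn, hproj j, hτn]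
      exact rfl
  -- τ of finite sups of |π_j|
  have key : ∀ (s : Finset (Fin n)) (hs : s.Nonempty),
      InHn (fun t => s.sup' hs fun j => |t j|) ∧
      τ (fun t => s.sup' hs fun j => |t j|) = s.sup' hs fun j => |x j| := by
    intro s hs
    induction hs using Finset.Nonempty.cons_induction with
    | singleton a => simpa using habsj a
    | cons a s ha hs ih =>
      have heq : (fun t : Fin n → ℝ => (Finset.cons a s ha).sup' (Finset.cons_nonempty ha) fun j => |t j|)
          = (fun t => |t a|) ⊔ (fun t => s.sup' hs fun j => |t j|) := by
        funext t
        rw [Finset.sup'_cons hs, Pi.sup_apply]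
      constructor
      · rw [heq]; exact hsupIn _ _ (habsj a).1 ih.1
      · rw [heq, hsupτ _ _ (habsj a).1 ih.1, (habsj a).2, ih.2, Finset.sup'_cons]
  have hMIn : InHn M := (key Finset.univ ⟨⟨0, hn⟩, Finset.mem_univ _⟩).1
  have hτM : τ M = S := (key Finset.univ ⟨⟨0, hn⟩, Finset.mem_univ _⟩).2
  -- M t = ‖t‖
  have hMnorm : ∀ t, M t = ‖t‖ := by
    intro t
    have h0 : (0 : ℝ) ≤ M t :=
      le_trans (abs_nonneg _) (Finset.le_sup' (fun j => |t j|) (Finset.mem_univ ⟨0, hn⟩))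
    apply le_antisymm
    · apply Finset.sup'_le
      intro j _
      calc |t j| = ‖t j‖ := (Real.norm_eq_abs _).symm
        _ ≤ ‖t‖ := norm_le_pi_norm t j
    · refine (pi_norm_le_iff_of_nonneg h0).mpr fun j => ?_
      rw [Real.norm_eq_abs]
      exact Finset.le_sup' (fun j => |t j|) (Finset.mem_univ j)
  -- bddAbove for HnNorm and nonnegativity
  have hbdd : ∀ f : (Fin n → ℝ) → ℝ, Continuous f →
      BddAbove (Set.range fun t : {t : Fin n → ℝ // ‖t‖ = 1} => |f t.1|) := by
    intro f hf
    have hK : IsCompact (Metric.sphere (0 : Fin n → ℝ) 1) := isCompact_sphere 0 1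
    obtain ⟨C, hC⟩ := (hK.image (continuous_abs.comp hf)).bddAbove
    refine ⟨C, ?_⟩
    rintro y ⟨t, rfl⟩
    exact hC ⟨t.1, by simpa [Metric.mem_sphere, dist_zero_right] using t.2, rfl⟩
  have hne : Nonempty {t : Fin n → ℝ // ‖t‖ = 1} := by
    haveI : Nonempty (Fin n) := ⟨⟨0, hn⟩⟩
    exact ⟨⟨fun _ => 1, by simp [pi_norm_const]⟩⟩
  have hHnonneg : ∀ f : (Fin n → ℝ) → ℝ, (0 : ℝ) ≤ HnNorm f := fun f =>
    Real.iSup_nonneg fun t => abs_nonneg _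
  -- pointwise bound and main order inequality
  have main : ∀ f : (Fin n → ℝ) → ℝ, InHn f → τ f ≤ HnNorm f • S := by
    intro f hf
    have hpt : ∀ t, f t ≤ HnNorm f * ‖t‖ := by
      intro t
      by_cases ht : t = 0
      · subst ht
        have h0 : f 0 = 0 := by
          have := hf.2 0 le_rfl 0
          simpa using this
        simp [h0]
      · have hnt : (0 : ℝ) < ‖t‖ := norm_pos_iff.mpr ht
        set u := ‖t‖⁻¹ • t with hu
        have hu1 : ‖u‖ = 1 := by
          rw [hu, norm_smul, Real.norm_eq_abs, abs_of_nonneg (inv_nonneg.mpr hnt.le),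
            inv_mul_cancel₀ hnt.ne']
        have hft : f t = ‖t‖ * f u := by
          have := hf.2 ‖t‖ (norm_nonneg t) u
          rw [hu, smul_inv_smul₀ hnt.ne'] at this
          exact this
        have hfu : f u ≤ HnNorm f :=
          le_trans (le_abs_self _) (le_ciSup (hbdd f hf.1) (⟨u, hu1⟩ : {t : Fin n → ℝ // ‖t‖ = 1}))
        rw [hft, mul_comm]
        exact mul_le_mul_of_nonneg_right hfu hnt.le
    have hle : f ≤ HnNorm f • M := by
      intro t
      simpa [Pi.smul_apply, smul_eq_mul, hMnorm t] using hpt t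
    have hgIn : InHn (HnNorm f • M) := hsmulIn _ _ hMIn
    have hsupeq : f ⊔ HnNorm f • M = HnNorm f • M := sup_eq_right.mpr hle
    calc τ f ≤ τ f ⊔ τ (HnNorm f • M) := le_sup_left
      _ = τ (f ⊔ HnNorm f • M) := (hsupτ _ _ hf hgIn).symm
      _ = τ (HnNorm f • M) := by rw [hsupeq]
      _ = HnNorm f • τ M := hsmul _ _ hMIn
      _ = HnNorm f • S := by rw [hτM]
  have part1 : τ h ≤ HnNorm h • S := main h hh
  -- the negated version
  have hnegIn : InHn (-h) := by
    have := hsmulIn (-1) h hh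
    simpa [Pi.smul_def, smul_eq_mul, neg_one_mul] using this
  have hHneg : HnNorm (-h) = HnNorm h := by
    unfold HnNorm
    exact congrArg iSup (funext fun t => by simp)
  have hτneg : τ (-h) = -(τ h) := by
    have h1 : (-h) = (-1 : ℝ) • h := by funext t; simp
    rw [h1, hsmul (-1) h hh]; simp
  have part1' : -(τ h) ≤ HnNorm h • S := by
    have := main (-h) hnegIn
    rwa [hτneg, hHneg] at this
  refine ⟨part1, ?_⟩
  -- norm inequality via solid norm
  have hS0 : (0 : X) ≤ S :=
    le_trans (abs_nonneg (x ⟨0, hn⟩)) (Finset.le_sup' (fun j => |x j|) (Finset.mem_univ ⟨0, hn⟩))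
  have habs : |τ h| ≤ HnNorm h • S := by
    exact sup_le part1 part1'
  have hsolid : ‖τ h‖ ≤ ‖HnNorm h • S‖ := by
    apply HasSolidNorm.solid
    rwa [abs_of_nonneg (le_trans (abs_nonneg (τ h)) habs)]
  calc ‖τ h‖ ≤ ‖HnNorm h • S‖ := hsolid
    _ = |HnNorm h| * ‖S‖ := by rw [norm_smul, Real.norm_eq_abs]
    _ = HnNorm h * ‖S‖ := by rw [abs_of_nonneg (hHnonneg h)]
end

section
/- Let X be a Banach lattice, E a Banach space, and Y a Banach sequence lattice. Every absolutely Y-summing operator S : X → E is Y-concave, and its Y-concavity constant satisfies ‖S‖_{K_Y} ≤ ‖S‖_{Π_Y}. -/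
open Filter Topology

/-- The data of a Banach sequence lattice `Y`, recorded through the restrictions
`N n = ‖·‖_{ℝⁿ,Y}` of its norm to the finitely supported sequences `ℝⁿ`:
each `N n` is a (continuous) lattice norm on `ℝⁿ` and the family is consistent. -/
structure SeqLatticeNorm where
  N : ∀ n, (Fin n → ℝ) → ℝ
  cont : ∀ n, Continuous (N n)
  add_le : ∀ n (a b : Fin n → ℝ), N n (a + b) ≤ N n a + N n b
  smul_eq : ∀ n (c : ℝ) (a : Fin n → ℝ), N n (c • a) = |c| * N n a
  eq_zero : ∀ n (a : Fin n → ℝ), N n a = 0 → a = 0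
  mono : ∀ n (a b : Fin n → ℝ), (∀ j, |a j| ≤ |b j|) → N n a ≤ N n b
  consistent : ∀ n (a : Fin n → ℝ), N (n + 1) (Fin.snoc a 0) = N n a

/-- `T : E → X` is `Y`-convex with constant `C`:
`‖ ‖(Tw₁,...,Twₙ)‖_Y ‖_X ≤ C ‖(‖w₁‖,...,‖wₙ‖)‖_Y` for all finite tuples. -/
def YConvexWith {E X : Type*} [NormedAddCommGroup E] [NormedSpace ℝ E]
    [NormedAddCommGroup X] [Lattice X] [HasSolidNorm X] [IsOrderedAddMonoid X] [NormedSpace ℝ X]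
    (s : SeqLatticeNorm) (T : E → X) (C : ℝ) : Prop :=
  ∀ (n : ℕ) (w : Fin n → E) (τ : ((Fin n → ℝ) → ℝ) → X),
    IsKrivine (fun j => T (w j)) τ → ‖τ (s.N n)‖ ≤ C * s.N n fun j => ‖w j‖

/-- The `Y`-convexity constant `M^Y(T)`. -/
noncomputable def YConvexConst {E X : Type*} [NormedAddCommGroup E] [NormedSpace ℝ E]
    [NormedAddCommGroup X] [Lattice X] [HasSolidNorm X] [IsOrderedAddMonoid X] [NormedSpace ℝ X]
    (s : SeqLatticeNorm) (T : E → X) : ℝ :=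
  sInf {C : ℝ | 0 ≤ C ∧ YConvexWith s T C}

/-- `S : X → E` is `Y`-concave with constant `K`:
`‖(‖Sx₁‖,...,‖Sxₙ‖)‖_Y ≤ K ‖ ‖(x₁,...,xₙ)‖_Y ‖_X` for all finite tuples. -/
def YConcaveWith {E X : Type*} [NormedAddCommGroup E] [NormedSpace ℝ E]
    [NormedAddCommGroup X] [Lattice X] [HasSolidNorm X] [IsOrderedAddMonoid X] [NormedSpace ℝ X]
    (s : SeqLatticeNorm) (S : X → E) (K : ℝ) : Prop :=
  ∀ (n : ℕ) (x : Fin n → X) (τ : ((Fin n → ℝ) → ℝ) → X),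
    IsKrivine x τ → s.N n (fun j => ‖S (x j)‖) ≤ K * ‖τ (s.N n)‖

/-- The `Y`-concavity constant `M_Y(S)`. -/
noncomputable def YConcaveConst {E X : Type*} [NormedAddCommGroup E] [NormedSpace ℝ E]
    [NormedAddCommGroup X] [Lattice X] [HasSolidNorm X] [IsOrderedAddMonoid X] [NormedSpace ℝ X]
    (s : SeqLatticeNorm) (S : X → E) : ℝ :=
  sInf {K : ℝ | 0 ≤ K ∧ YConcaveWith s S K}

/-- `S : X → E` is absolutely `Y`-summing with constant `C`:
`‖(‖Sx₁‖,...,‖Sxₙ‖)‖_Y ≤ C · sup_{x* ∈ B_{X*}} ‖(⟨x₁,x*⟩,...,⟨xₙ,x*⟩)‖_Y`. -/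
def YSummingWith {E X : Type*} [NormedAddCommGroup E] [NormedSpace ℝ E]
    [NormedAddCommGroup X] [NormedSpace ℝ X]
    (s : SeqLatticeNorm) (S : X → E) (C : ℝ) : Prop :=
  ∀ (n : ℕ) (x : Fin n → X),
    s.N n (fun j => ‖S (x j)‖) ≤
      C * sSup {r : ℝ | ∃ φ : X →L[ℝ] ℝ, ‖φ‖ ≤ 1 ∧ r = s.N n fun j => φ (x j)}

/-- The absolutely `Y`-summing norm `‖S‖_{Π_Y}`. -/
noncomputable def YSummingConst {E X : Type*} [NormedAddCommGroup E] [NormedSpace ℝ E]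
    [NormedAddCommGroup X] [NormedSpace ℝ X]
    (s : SeqLatticeNorm) (S : X → E) : ℝ :=
  sInf {C : ℝ | 0 ≤ C ∧ YSummingWith s S C}


section Aux

lemma SLN_zero (s : SeqLatticeNorm) (n : ℕ) : s.N n 0 = 0 := by
  have h := s.smul_eq n 0 0
  simpa using h

lemma SLN_neg (s : SeqLatticeNorm) (n : ℕ) (a : Fin n → ℝ) : s.N n (-a) = s.N n a := by
  have h := s.smul_eq n (-1) a
  simpa using h

lemma SLN_nonneg (s : SeqLatticeNorm) (n : ℕ) (a : Fin n → ℝ) : 0 ≤ s.N n a := by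
  have h := s.add_le n a (-a)
  rw [add_neg_cancel, SLN_zero, SLN_neg] at h
  linarith

lemma inHn_N (s : SeqLatticeNorm) (n : ℕ) : InHn (s.N n) :=
  ⟨s.cont n, fun l hl t => by rw [s.smul_eq, abs_of_nonneg hl]⟩

lemma InHn.smul {n : ℕ} {h : (Fin n → ℝ) → ℝ} (hh : InHn h) (c : ℝ) : InHn (c • h) := by
  refine ⟨hh.1.const_smul c, fun l hl t => ?_⟩
  simp only [Pi.smul_apply, smul_eq_mul, hh.2 l hl t]
  ring

lemma inHn_proj {n : ℕ} (j : Fin n) : InHn (fun t : Fin n → ℝ => t j) :=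
  ⟨continuous_apply j, fun l hl t => by simp⟩

lemma inHn_linsum {n : ℕ} (c : Fin n → ℝ) (u : Finset (Fin n)) :
    InHn (fun t : Fin n → ℝ => ∑ j ∈ u, c j * t j) := by
  refine ⟨continuous_finset_sum _ fun j _ => continuous_const.mul (continuous_apply j),
    fun l hl t => ?_⟩
  simp only [Pi.smul_apply, smul_eq_mul, Finset.mul_sum]
  exact Finset.sum_congr rfl fun j _ => by ring

section Krivine

variable {X : Type*} [NormedAddCommGroup X] [Lattice X] [HasSolidNorm X] [IsOrderedAddMonoid X] [NormedSpace ℝ X]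
  {n : ℕ} {x : Fin n → X} {τ : ((Fin n → ℝ) → ℝ) → X} (hτ : IsKrivine x τ)

include hτ

lemma krivine_zero : τ 0 = 0 := by
  have h0 : InHn (0 : (Fin n → ℝ) → ℝ) := ⟨continuous_const, fun l hl t => by simp⟩
  have := hτ.2.1 0 0 h0
  simpa using this

lemma krivine_mono {h g : (Fin n → ℝ) → ℝ} (hh : InHn h) (hg : InHn g)
    (hle : ∀ t, h t ≤ g t) : τ h ≤ τ g := by
  have hsup : h ⊔ g = g := by
    funext t
    exact sup_eq_right.2 (hle t)
  calc τ h ≤ τ h ⊔ τ g := le_sup_left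
    _ = τ (h ⊔ g) := (hτ.2.2.1 h g hh hg).symm
    _ = τ g := by rw [hsup]

lemma krivine_linsum (c : Fin n → ℝ) (u : Finset (Fin n)) :
    τ (fun t => ∑ j ∈ u, c j * t j) = ∑ j ∈ u, c j • x j := by
  classical
  induction u using Finset.induction with
  | empty =>
      simp only [Finset.sum_empty]
      exact krivine_zero hτ
  | @insert a u ha ih =>
      have heq : (fun t : Fin n → ℝ => ∑ j ∈ insert a u, c j * t j)
          = (c a • fun t : Fin n → ℝ => t a) + (fun t => ∑ j ∈ u, c j * t j) := by
        funext t
        simp [Finset.sum_insert ha]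
      rw [heq, hτ.1 _ _ ((inHn_proj a).smul (c a)) (inHn_linsum c u),
        hτ.2.1 (c a) _ (inHn_proj a), hτ.2.2.2 a, ih, Finset.sum_insert ha]

end Krivine

lemma krivine_key {X : Type*} [NormedAddCommGroup X] [Lattice X] [HasSolidNorm X] [IsOrderedAddMonoid X] [NormedSpace ℝ X]
    (s : SeqLatticeNorm) {n : ℕ} {x : Fin n → X} {τ : ((Fin n → ℝ) → ℝ) → X}
    (hτ : IsKrivine x τ) (φ : X →L[ℝ] ℝ) (hφ : ‖φ‖ ≤ 1) :
    s.N n (fun j => φ (x j)) ≤ ‖τ (s.N n)‖ := by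
  classical
  set a : Fin n → ℝ := fun j => φ (x j) with ha_def
  by_cases ha : a = 0
  · rw [ha, SLN_zero]
    positivity
  · -- Hahn–Banach extension of c • a ↦ c * N a
    have H : ∀ c : ℝ, c • a = 0 → c • (s.N n a) = 0 := by
      intro c hc
      rcases smul_eq_zero.1 hc with hc0 | hc0
      · simp [hc0]
      · exact absurd hc0 ha
    set f := LinearPMap.mkSpanSingleton' (σ := RingHom.id ℝ) a (s.N n a) H with hf_def
    have hf : ∀ z : f.domain, f z ≤ s.N n z := by
      rintro ⟨z, hz⟩
      rcases Submodule.mem_span_singleton.1 hz with ⟨c, rfl⟩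
      rw [LinearPMap.mkSpanSingleton'_apply, s.smul_eq, smul_eq_mul]
      exact mul_le_mul_of_nonneg_right (le_abs_self c) (SLN_nonneg s n a)
    obtain ⟨g, hg_eq, hg_le⟩ := exists_extension_of_le_sublinear f (s.N n)
      (fun c hc t => by rw [s.smul_eq, abs_of_pos hc]) (s.add_le n) hf
    have hmem : a ∈ f.domain := Submodule.mem_span_singleton_self a
    have hga : g a = s.N n a := by
      have h1 := hg_eq ⟨a, hmem⟩
      rw [h1]
      exact LinearPMap.mkSpanSingleton'_apply_self a (s.N n a) H hmem
    set cvec : Fin n → ℝ := fun j => g (fun k => if j = k then 1 else 0) with hcvec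
    have hgfun : ∀ t, g t = ∑ j, cvec j * t j := by
      intro t
      rw [LinearMap.pi_apply_eq_sum_univ g t]
      exact Finset.sum_congr rfl fun j _ => by rw [smul_eq_mul, mul_comm]
    set hlin : (Fin n → ℝ) → ℝ := fun t => ∑ j, cvec j * t j with hlin_def
    have hlin_in : InHn hlin := inHn_linsum cvec Finset.univ
    set v : X := ∑ j, cvec j • x j with hv
    have hτlin : τ hlin = v := krivine_linsum hτ cvec Finset.univ
    have hle1 : τ hlin ≤ τ (s.N n) :=
      krivine_mono hτ hlin_in (inHn_N s n) fun t => le_of_eq_of_le (hgfun t).symm (hg_le t)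
    have hle2 : -τ hlin ≤ τ (s.N n) := by
      have hneg : τ ((-1 : ℝ) • hlin) = -τ hlin := by
        rw [hτ.2.1 (-1) hlin hlin_in]
        simp
      rw [← hneg]
      refine krivine_mono hτ (hlin_in.smul (-1)) (inHn_N s n) fun t => ?_
      have h1 : g (-t) ≤ s.N n (-t) := hg_le (-t)
      rw [map_neg, SLN_neg, hgfun] at h1
      simpa [hlin_def] using h1
    have habs : |τ hlin| ≤ τ (s.N n) := abs_le'.2 ⟨hle1, hle2⟩
    have hτN_nonneg : 0 ≤ τ (s.N n) := le_trans (abs_nonneg _) habs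
    have hnorm : ‖τ hlin‖ ≤ ‖τ (s.N n)‖ :=
      norm_le_norm_of_abs_le_abs (by rwa [abs_of_nonneg hτN_nonneg])
    have hφv : φ v = s.N n a := by
      rw [hv, map_sum]
      rw [← hga, hgfun a]
      exact Finset.sum_congr rfl fun j _ => by rw [map_smul, smul_eq_mul]
    calc s.N n a = φ v := hφv.symm
      _ ≤ |φ v| := le_abs_self _
      _ ≤ ‖φ‖ * ‖v‖ := φ.le_opNorm v
      _ ≤ 1 * ‖v‖ := mul_le_mul_of_nonneg_right hφ (norm_nonneg v)
      _ = ‖τ hlin‖ := by rw [one_mul, hτlin]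
      _ ≤ ‖τ (s.N n)‖ := hnorm

lemma summing_imp_concave {E X : Type*} [NormedAddCommGroup E] [NormedSpace ℝ E]
    [NormedAddCommGroup X] [Lattice X] [HasSolidNorm X] [IsOrderedAddMonoid X] [NormedSpace ℝ X]
    (s : SeqLatticeNorm) (S : X → E) {C : ℝ} (hC : 0 ≤ C)
    (hsum : YSummingWith s S C) : YConcaveWith s S C := by
  intro n x τ hτ
  have hsup : sSup {r : ℝ | ∃ φ : X →L[ℝ] ℝ, ‖φ‖ ≤ 1 ∧ r = s.N n fun j => φ (x j)}
      ≤ ‖τ (s.N n)‖ := by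
    refine Real.sSup_le ?_ (norm_nonneg _)
    rintro r ⟨φ, hφ, rfl⟩
    exact krivine_key s hτ φ hφ
  exact (hsum n x).trans (mul_le_mul_of_nonneg_left hsup hC)

end Aux

/-- Every absolutely `Y`-summing operator `S : X → E` is `Y`-concave, with
`‖S‖_{K_Y} ≤ ‖S‖_{Π_Y}`. -/
theorem ysumming_yconcave {E X : Type*} [NormedAddCommGroup E] [NormedSpace ℝ E]
    [CompleteSpace E] [NormedAddCommGroup X] [Lattice X] [HasSolidNorm X] [IsOrderedAddMonoid X] [NormedSpace ℝ X] [CompleteSpace X]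
    (s : SeqLatticeNorm) (S : X →ₗ[ℝ] E) (hS : ∃ C > 0, YSummingWith s (⇑S) C) :
    (∃ K > 0, YConcaveWith s (⇑S) K) ∧
    YConcaveConst s (⇑S) ≤ YSummingConst s (⇑S) := by
  obtain ⟨C, hC, hsum⟩ := hS
  constructor
  · exact ⟨C, hC, summing_imp_concave s (⇑S) hC.le hsum⟩
  · refine csInf_le_csInf ⟨0, fun K hK => hK.1⟩ ⟨C, hC.le, hsum⟩ ?_
    rintro C' ⟨h0, hs⟩
    exact ⟨h0, summing_imp_concave s (⇑S) h0 hs⟩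
end
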